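/- arXiv:1506.02017 — 2 statements merged into one kernel-verified Lean document; each statement's English description precedes it below -/
import Mathlib

section
/- Let A be a unital C*-algebra with a tracial state φ, a ∈ A, and ε > 0. Then |ε · φ(a (a* a + ε²)⁻¹)| ≤ 1/√2 < 1. -/
open ComplexOrder

theorem eps_trace_bound {A : Type*} [CStarAlgebra A] [PartialOrder A]
    [StarOrderedRing A] (φ : A →ₗ[ℂ] ℂ)
    (hpos : ∀ a : A, 0 ≤ a → 0 ≤ φ a)
    (hone : φ 1 = 1)
    (htr : ∀ a b : A, φ (a * b) = φ (b * a))
    (a : A) (ε : ℝ) (hε : 0 < ε) :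
    ‖(ε : ℂ) * φ (a * Ring.inverse (star a * a + algebraMap ℂ A (ε ^ 2 : ℝ)))‖
        ≤ 1 / Real.sqrt 2 ∧ 1 / Real.sqrt 2 < 1 := by
  have hs2 : (1:ℝ) < Real.sqrt 2 := by
    rw [show (1:ℝ) = Real.sqrt 1 by simp]
    exact Real.sqrt_lt_sqrt (by norm_num) (by norm_num)
  refine ⟨?_, by rw [div_lt_one (by linarith)]; exact hs2⟩
  -- notation
  set t : A := star a * a with ht
  set e : A := algebraMap ℂ A ((ε ^ 2 : ℝ) : ℂ) with he
  set c : A := t + e with hc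
  -- φ of selfadjoint elements is real
  have hsa_im : ∀ h : A, IsSelfAdjoint h → (φ h).im = 0 := by
    intro h hh
    have hdecomp : h⁺ - h⁻ = h := CFC.posPart_sub_negPart h hh
    have h1 : 0 ≤ φ h⁺ := hpos _ (CFC.posPart_nonneg h)
    have h2 : 0 ≤ φ h⁻ := hpos _ (CFC.negPart_nonneg h)
    rw [Complex.nonneg_iff] at h1 h2
    have : φ h = φ h⁺ - φ h⁻ := by rw [← map_sub, hdecomp]
    rw [this]
    simp [Complex.sub_im, ← h1.2, ← h2.2]
  -- φ is star-preserving
  have hstar : ∀ z : A, φ (star z) = starRingEnd ℂ (φ z) := by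
    intro z
    have hh : IsSelfAdjoint (z + star z) := by
      rw [IsSelfAdjoint, star_add, star_star, add_comm]
    have hk : IsSelfAdjoint (Complex.I • (star z - z)) := by
      rw [IsSelfAdjoint, star_smul, star_sub, star_star]
      simp only [RCLike.star_def, Complex.conj_I, neg_smul, ← smul_neg, neg_sub]
    have e1 := hsa_im _ hh
    have e2 := hsa_im _ hk
    rw [map_add] at e1
    rw [map_smul, map_sub] at e2
    set p := φ z
    set q := φ (star z)
    have e1' : p.im + q.im = 0 := by simpa using e1
    have e2' : q.re - p.re = 0 := by
      simpa [Complex.smul_im, Complex.sub_re, Complex.sub_im] using e2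
    apply Complex.ext <;> simp [Complex.conj_re, Complex.conj_im] <;> linarith
  -- Cauchy–Schwarz with x = 1
  have hCS : ∀ z : A, (‖φ z‖) ^ 2 ≤ (φ (star z * z)).re := by
    intro z
    set p := φ z with hp
    have hw : (0:ℂ) ≤ φ (star (z - p • 1) * (z - p • 1)) :=
      hpos _ (star_mul_self_nonneg _)
    have hexp : star (z - p • 1) * (z - p • 1)
        = star z * z - (starRingEnd ℂ p) • z - p • star z
          + (starRingEnd ℂ p * p) • (1:A) := by
      simp only [star_sub, star_smul, star_one, RCLike.star_def, sub_mul, mul_sub,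
        smul_mul_assoc, mul_smul_comm, one_mul, mul_one, smul_sub, smul_smul,
        mul_comm]
      abel
    rw [hexp] at hw
    have hφ : φ (star z * z - (starRingEnd ℂ p) • z - p • star z
        + (starRingEnd ℂ p * p) • (1:A))
        = φ (star z * z) - (starRingEnd ℂ p * p) := by
      rw [map_add, map_sub, map_sub, map_smul, map_smul, map_smul, hone,
        hstar z, ← hp]
      simp only [smul_eq_mul]
      ring
    rw [hφ, Complex.nonneg_iff] at hw
    have : (starRingEnd ℂ p * p).re = ‖p‖ ^ 2 := by
      rw [← Complex.normSq_eq_conj_mul_self, Complex.ofReal_re, Complex.sq_norm]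
    rw [Complex.sub_re, this] at hw
    linarith [hw.1]
  -- invertibility of c
  have hε2 : ((ε ^ 2 : ℝ) : ℂ) ≠ 0 := by
    simp only [ne_eq, Complex.ofReal_eq_zero]
    positivity
  have hue : IsUnit e := (IsUnit.mk0 _ hε2).map (algebraMap ℂ A)
  have hte : 0 ≤ t := star_mul_self_nonneg a
  have hee : 0 ≤ e := by
    rw [he, Algebra.algebraMap_eq_smul_one, Complex.coe_smul]
    exact smul_nonneg (by positivity) zero_le_one
  have huc : IsUnit c := CStarAlgebra.isUnit_of_le e (le_add_of_nonneg_left hte) (hue.isStrictlyPositive hee)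
  set b : A := Ring.inverse c with hb
  have hbc : b * c = 1 := Ring.inverse_mul_cancel c huc
  have hcb : c * b = 1 := Ring.mul_inverse_cancel c huc
  have hcsa : star c = c := by
    rw [hc, star_add, ht, star_mul, star_star, he]
    congr 1
    simp [Algebra.algebraMap_eq_smul_one, star_smul, Complex.conj_ofReal]
  have hbsa : star b = b := by rw [hb, ← Ring.inverse_star, hcsa]
  have hec : e * t = t * e := (Algebra.commutes _ _)
  have htc : t * c = c * t := by rw [hc, mul_add, add_mul, hec]
  have htb : t * b = b * t := by
    have : b * (t * c) * b = b * (c * t) * b := by rw [htc]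
    calc t * b = b * c * (t * b) := by rw [hbc, one_mul]
    _ = b * (c * t) * b := by noncomm_ring
    _ = b * (t * c) * b := by rw [htc]
    _ = (b * t) * (c * b) := by noncomm_ring
    _ = b * t := by rw [hcb, mul_one]
  -- key inequality : (4 ε²) • (b t b) ≤ 1
  have hsq : (0:A) ≤ (t - e) * (t - e) := by
    have : star (t - e) = t - e := by
      rw [star_sub]
      have h1 : star t = t := by rw [ht, star_mul, star_star]
      have h2 : star e = e := by
        have := hcsa
        rw [hc, star_add, h1] at this
        exact add_left_cancel this
      rw [h1, h2]
    calc (0:A) ≤ star (t - e) * (t - e) := star_mul_self_nonneg _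
    _ = (t - e) * (t - e) := by rw [this]
  have hkey : (4:ℂ) • (t * e) ≤ c * c := by
    have hcc : c * c = (t - e) * (t - e) + (4:ℂ) • (t * e) := by
      rw [hc]
      have : e * t = t * e := hec
      rw [mul_sub, sub_mul, sub_mul, mul_add, add_mul, add_mul, this]
      rw [show (4:ℂ) • (t * e) = (t*e) + (t*e) + (t*e) + (t*e) by
        rw [show (4:ℂ) = 1+1+1+1 by norm_num]; simp [add_smul]]
      abel
    rw [hcc]
    exact le_add_of_nonneg_left hsq
  have hconj : b * ((4:ℂ) • (t * e)) * b ≤ b * (c * c) * b := by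
    have := star_left_conjugate_le_conjugate hkey b
    rwa [hbsa] at this
  have hrhs : b * (c * c) * b = 1 := by
    calc b * (c * c) * b = (b * c) * (c * b) := by noncomm_ring
    _ = 1 := by rw [hbc, hcb, one_mul]
  have hlhs : b * ((4:ℂ) • (t * e)) * b
      = ((4 * (ε ^ 2 : ℝ) : ℂ)) • (b * (t * b)) := by
    have het : t * e = (((ε ^ 2 : ℝ)) : ℂ) • t := by
      rw [he, Algebra.algebraMap_eq_smul_one, mul_smul_comm, mul_one]
    rw [het, smul_smul, mul_smul_comm, smul_mul_assoc, mul_assoc]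
  rw [hlhs, hrhs] at hconj
  -- apply φ
  have hφmono : ((4 * (ε ^ 2 : ℝ) : ℂ)) * φ (b * (t * b)) ≤ 1 := by
    have h0 : (0:ℂ) ≤ φ (1 - ((4 * (ε ^ 2 : ℝ) : ℂ)) • (b * (t * b))) :=
      hpos _ (sub_nonneg.mpr hconj)
    rw [map_sub, map_smul, hone] at h0
    have := sub_nonneg.mp h0
    simpa [smul_eq_mul] using this
  have hre : (4 * ε ^ 2) * (φ (b * (t * b))).re ≤ 1 := by
    have h1 := (Complex.le_def.mp hφmono).1
    simpa [Complex.mul_re, ← Complex.ofReal_pow, Complex.ofReal_re,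
      Complex.ofReal_im] using h1
  have hCS' := hCS (a * b)
  have hstar_ab : star (a * b) * (a * b) = b * (t * b) := by
    rw [star_mul, hbsa, ht]
    noncomm_ring
  rw [hstar_ab] at hCS'
  have habs : ‖(ε:ℂ) * φ (a * b)‖ = ε * ‖φ (a * b)‖ := by
    rw [norm_mul]
    simp [abs_of_pos hε]
  rw [habs]
  have hnn := norm_nonneg (φ (a * b))
  have hb2 : (ε * ‖φ (a * b)‖) ^ 2 ≤ 1 / 4 := by
    have h2 := mul_le_mul_of_nonneg_left hCS' (sq_nonneg ε)
    nlinarith [sq_nonneg ε]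
  have hle : ε * ‖φ (a * b)‖ ≤ 1 / 2 := by
    nlinarith [mul_nonneg hε.le hnn]
  have hhalf : (1:ℝ) / 2 ≤ 1 / Real.sqrt 2 := by
    rw [div_le_div_iff₀ (by norm_num) (by linarith)]
    nlinarith [Real.sq_sqrt (show (0:ℝ) ≤ 2 by norm_num), Real.sqrt_nonneg 2]
  linarith
end

section
/- Let R be a ring, and let a, d be central elements and b, c arbitrary elements of R such that bc − ad and cb − ad are invertible. Then the 2×2 matrix [[a, b], [c, d]] over R is invertible with inverse [[−d(bc − ad)⁻¹, b(cb − ad)⁻¹], [c(bc − ad)⁻¹, −a(cb − ad)⁻¹]]. -/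
theorem two_by_two_inverse {R : Type*} [Ring R] (a b c d : R)
    (ha : ∀ r : R, a * r = r * a) (hd : ∀ r : R, d * r = r * d)
    (h₁ : IsUnit (b * c - a * d)) (h₂ : IsUnit (c * b - a * d)) :
    (!![a, b; c, d] : Matrix (Fin 2) (Fin 2) R) *
        !![-d * Ring.inverse (b * c - a * d), b * Ring.inverse (c * b - a * d);
           c * Ring.inverse (b * c - a * d), -a * Ring.inverse (c * b - a * d)] = 1 ∧
    (!![-d * Ring.inverse (b * c - a * d), b * Ring.inverse (c * b - a * d);
        c * Ring.inverse (b * c - a * d), -a * Ring.inverse (c * b - a * d)] : Matrix (Fin 2) (Fin 2) R) *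
        !![a, b; c, d] = 1 := by
  generalize hU : Ring.inverse (b * c - a * d) = u
  generalize hV : Ring.inverse (c * b - a * d) = v
  have hu1 : (b * c - a * d) * u = 1 := hU ▸ Ring.mul_inverse_cancel _ h₁
  have hu2 : u * (b * c - a * d) = 1 := hU ▸ Ring.inverse_mul_cancel _ h₁
  have hv1 : (c * b - a * d) * v = 1 := hV ▸ Ring.mul_inverse_cancel _ h₂
  have hv2 : v * (c * b - a * d) = 1 := hV ▸ Ring.inverse_mul_cancel _ h₂
  -- centrality helpers
  have had_u : a * d * u = u * (a * d) := by
    rw [mul_assoc, hd u, ← mul_assoc, ha u, mul_assoc]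
  have had_v : a * d * v = v * (a * d) := by
    rw [mul_assoc, hd v, ← mul_assoc, ha v, mul_assoc]
  -- intertwining identities
  have keyb : b * (c * b - a * d) = (b * c - a * d) * b := by
    rw [mul_sub, sub_mul, ← mul_assoc]
    congr 1
    rw [← mul_assoc, ← ha b, mul_assoc, ← hd b, ← mul_assoc]
  have keyc : c * (b * c - a * d) = (c * b - a * d) * c := by
    rw [mul_sub, sub_mul, ← mul_assoc]
    congr 1
    rw [← mul_assoc, ← ha c, mul_assoc, ← hd c, ← mul_assoc]
  have hbv : b * v = u * b :=
    calc b * v = 1 * (b * v) := (one_mul _).symm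
      _ = (u * (b * c - a * d)) * (b * v) := by rw [hu2]
      _ = u * (((b * c - a * d) * b) * v) := by
            rw [mul_assoc, ← mul_assoc (b * c - a * d)]
      _ = u * ((b * (c * b - a * d)) * v) := by rw [keyb]
      _ = u * (b * ((c * b - a * d) * v)) := by rw [mul_assoc b]
      _ = u * b := by rw [hv1, mul_one]
  have hvc : v * c = c * u :=
    calc v * c = (v * c) * 1 := (mul_one _).symm
      _ = (v * c) * ((b * c - a * d) * u) := by rw [hu1]
      _ = v * ((c * (b * c - a * d)) * u) := by rw [mul_assoc v, mul_assoc c]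
      _ = v * (((c * b - a * d) * c) * u) := by rw [keyc]
      _ = (v * (c * b - a * d)) * (c * u) := by rw [mul_assoc, mul_assoc]
      _ = c * u := by rw [hv2, one_mul]
  -- entries of the first product
  have E1 : a * (-d * u) + b * (c * u) = 1 := by
    rw [neg_mul, mul_neg, ← mul_assoc, ← mul_assoc, neg_add_eq_sub, ← sub_mul, hu1]
  have E2 : a * (b * v) + b * (-a * v) = 0 := by
    rw [neg_mul, mul_neg, ← mul_assoc, ← mul_assoc, ha b, add_neg_cancel]
  have E3 : c * (-d * u) + d * (c * u) = 0 := by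
    rw [neg_mul, mul_neg, ← mul_assoc, ← mul_assoc, hd c, neg_add_cancel]
  have E4 : c * (b * v) + d * (-a * v) = 1 := by
    rw [neg_mul, mul_neg, ← mul_assoc, ← mul_assoc, hd a, ← sub_eq_add_neg, ← sub_mul, hv1]
  -- entries of the second product
  have E5 : -d * u * a + b * v * c = 1 := by
    rw [neg_mul, neg_mul, mul_assoc d u a, ← ha u, ← mul_assoc d a u, hd a, had_u,
      hbv, mul_assoc u b c, neg_add_eq_sub, ← mul_sub, hu2]
  have E6 : -d * u * b + b * v * d = 0 := by
    rw [neg_mul, neg_mul, mul_assoc d u b, hd (u * b), hbv, neg_add_cancel]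
  have E7 : c * u * a + -a * v * c = 0 := by
    rw [neg_mul, neg_mul, mul_assoc a v c, hvc, mul_assoc c u a, ← ha u,
      ← mul_assoc c a u, ← ha c, mul_assoc a c u, add_neg_cancel]
  have E8 : c * u * b + -a * v * d = 1 := by
    rw [neg_mul, neg_mul, mul_assoc a v d, ← hd v, ← mul_assoc a d v, had_v,
      ← hvc, mul_assoc v c b, ← sub_eq_add_neg, ← mul_sub, hv2]
  constructor
  · rw [Matrix.mul_fin_two, E1, E2, E3, E4, Matrix.one_fin_two]
  · rw [Matrix.mul_fin_two, E5, E6, E7, E8, Matrix.one_fin_two]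
end
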